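/- Let γ: 𝕋¹ → ℝ³ be a closed C¹ curve with unit speed, i.e. |γ'(x)| = 1 for all x. Then the distortion δ_∞(γ) := sup_{x≠y} ϑ(x-y)/|γ(x)-γ(y)| satisfies δ_∞(γ) ≥ π/2. -/

import Mathlib

open MeasureTheory Real

/-- Geodesic distance on the torus `𝕋¹ = [-π,π]` with endpoints identified:
`ϑ(z) = min{|z|, 2π-|z|}` extended `2π`-periodically. -/
noncomputable def vartheta (z : ℝ) : ℝ :=
  |z - 2 * π * ((round (z / (2 * π)) : ℤ) : ℝ)|

section aux
open Complex Set intervalIntegral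

local notation "𝕊" => AddCircle (2 * π)

lemma hab0 : (0:ℝ) < 0 + 2 * π := lt_add_of_pos_right 0 Real.two_pi_pos

/-- Parseval for a continuous `2π`-periodic function. -/
lemma parseval_aux (g : ℝ → ℂ) (hg : Continuous g) (hper : Function.Periodic g (2*π)) :
    Summable (fun n : ℤ => ‖fourierCoeffOn hab0 g n‖^2) ∧
    ∫ x in (0:ℝ)..(0+2*π), ‖g x‖^2 =
      (2*π) * ∑' n : ℤ, ‖fourierCoeffOn hab0 g n‖^2 := by
  haveI : Fact (0 < 2 * π) := ⟨Real.two_pi_pos⟩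
  have hG : Continuous (AddCircle.liftIco (2*π) 0 g) :=
    AddCircle.liftIco_continuous (by simpa using (hper 0).symm) hg.continuousOn
  set G : C(𝕊, ℂ) := ⟨AddCircle.liftIco (2*π) 0 g, hG⟩ with hGdef
  set FL : Lp ℂ 2 (@AddCircle.haarAddCircle (2*π) _) :=
    ContinuousMap.toLp (p := 2) AddCircle.haarAddCircle ℂ G with hFLdef
  have hcoeff : ∀ n : ℤ, fourierCoeff (⇑FL) n = fourierCoeffOn hab0 g n := by
    intro n
    rw [show (⇑FL) = _ from rfl, fourierCoeff_toLp]
    exact fourierCoeff_liftIco_eq g n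
  -- summability
  have hsm : Summable (fun n : ℤ => ‖fourierCoeff (⇑FL) n‖^2) := by
    have h1 : Memℓp (⇑(fourierBasis.repr FL)) 2 := lp.memℓp _
    have h2 := h1.summable (by norm_num)
    refine h2.congr fun n => ?_
    rw [fourierBasis_repr]
    rw [show ((2:ENNReal).toReal) = ((2:ℕ):ℝ) by norm_num, Real.rpow_natCast]
  constructor
  · simpa [hcoeff] using hsm
  · have hpars := tsum_sq_fourierCoeff FL
    have hae : ∫ t : 𝕊, ‖FL t‖^2 ∂AddCircle.haarAddCircle
        = ∫ t : 𝕊, ‖G t‖^2 ∂AddCircle.haarAddCircle := by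
      refine integral_congr_ae ?_
      filter_upwards [ContinuousMap.coeFn_toLp (𝕜 := ℂ) (p := 2) AddCircle.haarAddCircle G]
        with t ht
      rw [ht]
    have hint : ∫ x in (0:ℝ)..(0+2*π), ‖g x‖^2 = ∫ t : 𝕊, ‖G t‖^2 ∂(volume : Measure 𝕊) := by
      rw [← AddCircle.intervalIntegral_preimage (2*π) 0 (fun t : 𝕊 => ‖G t‖^2)]
      rw [integral_of_le (le_of_lt hab0), integral_of_le (le_of_lt hab0)]
      rw [integral_Ioc_eq_integral_Ioo, integral_Ioc_eq_integral_Ioo]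
      refine setIntegral_congr_fun measurableSet_Ioo (fun x hx => ?_)
      have : G (↑x : 𝕊) = g x := AddCircle.liftIco_coe_apply (Ioo_subset_Ico_self hx)
      rw [this]
    rw [hint, AddCircle.volume_eq_smul_haarAddCircle, MeasureTheory.integral_smul_measure _ _,
      ENNReal.toReal_ofReal Real.two_pi_pos.le, ← hae, ← hpars]
    rw [smul_eq_mul]
    congr 1
    exact tsum_congr (fun n => by rw [hcoeff])

/-- Wirtinger inequality for a zero-mean `2π`-periodic `C¹` function. -/
lemma wirtinger_aux (f f' : ℝ → ℂ) (hd : ∀ x, HasDerivAt f (f' x) x)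
    (hc : Continuous f') (hperf : Function.Periodic f (2*π))
    (hperf' : Function.Periodic f' (2*π))
    (hmean : ∫ x in (0:ℝ)..(0+2*π), f x = 0) :
    ∫ x in (0:ℝ)..(0+2*π), ‖f x‖^2 ≤ ∫ x in (0:ℝ)..(0+2*π), ‖f' x‖^2 := by
  haveI : Fact (0 < 2 * π) := ⟨Real.two_pi_pos⟩
  have hfc : Continuous f := by
    rw [continuous_iff_continuousAt]; exact fun x => (hd x).continuousAt
  obtain ⟨hs1, he1⟩ := parseval_aux f hfc hperf
  obtain ⟨hs2, he2⟩ := parseval_aux f' hc hperf'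
  -- coefficient comparison
  have hcomp : ∀ n : ℤ, ‖fourierCoeffOn hab0 f n‖^2 ≤ ‖fourierCoeffOn hab0 f' n‖^2 := by
    intro n
    rcases eq_or_ne n 0 with rfl | hn
    · have : fourierCoeffOn hab0 f 0 = 0 := by
        rw [fourierCoeffOn_eq_integral]
        simp only [neg_zero, fourier_zero, one_smul, hmean, smul_zero]
      rw [this]
      simp only [norm_zero, ne_eq, OfNat.ofNat_ne_zero, not_false_eq_true, zero_pow]
      positivity

    · have key := fourierCoeffOn_of_hasDerivAt hab0 hn
        (fun x _ => hd x) ((hc.intervalIntegrable _ _))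
      have hfb : f (0 + 2*π) - f 0 = 0 := by rw [hperf 0]; ring
      rw [hfb, mul_zero, zero_sub] at key
      have hn' : (n:ℂ) ≠ 0 := Int.cast_ne_zero.mpr hn
      have hcn : fourierCoeffOn hab0 f n = (I * n)⁻¹ * fourierCoeffOn hab0 f' n := by
        rw [key]
        have hπ : (π:ℂ) ≠ 0 := Complex.ofReal_ne_zero.mpr Real.pi_ne_zero
        field_simp
        push_cast; ring
      rw [hcn, norm_mul, norm_inv, norm_mul, Complex.norm_I, one_mul]
      have h1 : (1:ℝ) ≤ ‖(n:ℂ)‖ := by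
        rw [Complex.norm_intCast]
        exact_mod_cast Int.one_le_abs hn
      have h2 : ‖(n:ℂ)‖⁻¹ ≤ 1 := by
        rw [inv_le_one_iff₀]; right; exact h1
      rw [mul_pow]
      have h3 : ‖(n:ℂ)‖⁻¹ ^ 2 ≤ 1 := by
        nlinarith [inv_nonneg.mpr (norm_nonneg (n:ℂ))]
      exact mul_le_of_le_one_left (by positivity) h3
  rw [he1, he2]
  have := Summable.tsum_le_tsum hcomp hs1 hs2
  nlinarith [Real.two_pi_pos]

lemma exists_short_antipodal (γ γ' : ℝ → EuclideanSpace ℝ (Fin 3))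
    (hper : Function.Periodic γ (2 * π))
    (hderiv : ∀ x, HasDerivAt γ (γ' x) x)
    (hcont : Continuous γ')
    (hspeed : ∀ x, ‖γ' x‖ = 1) :
    ∃ x : ℝ, ‖γ (x + π) - γ x‖ ≤ 2 := by
  by_contra hcon
  push_neg at hcon
  set w : ℝ → EuclideanSpace ℝ (Fin 3) := fun x => γ (x + π) - γ x with hw
  set w' : ℝ → EuclideanSpace ℝ (Fin 3) := fun x => γ' (x + π) - γ' x with hw'
  have hshift : ∀ c x, HasDerivAt (fun y => γ (y + c)) (γ' (x + c)) x := by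
    intro c x
    exact (hderiv (x + c)).comp_add_const x c
  have hdw : ∀ x, HasDerivAt w (w' x) x := fun x => (hshift π x).sub (hderiv x)
  have hγ'per : ∀ x, γ' (x + 2*π) = γ' x := by
    intro x
    have h1 : HasDerivAt (fun y => γ (y + 2*π)) (γ' (x + 2*π)) x := hshift (2*π) x
    have h2 : (fun y => γ (y + 2*π)) = γ := funext fun y => hper y
    rw [h2] at h1
    exact h1.unique (hderiv x)
  have hwanti : ∀ x, w (x + π) = -(w x) := by
    intro x
    have : x + π + π = x + 2*π := by ring
    simp only [hw, this, hper x]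
    abel
  have hwper : ∀ x, w (x + 2*π) = w x := by
    intro x
    have h := hwanti (x + π)
    have h2 := hwanti x
    have : x + π + π = x + 2*π := by ring
    rw [this] at h
    rw [h, h2, neg_neg]
  have hw'per : ∀ x, w' (x + 2*π) = w' x := by
    intro x
    simp only [hw', hγ'per]
    have : x + 2*π + π = x + π + 2*π := by ring
    rw [this, hγ'per]
  have hw'cont : Continuous w' := (hcont.comp (continuous_id.add continuous_const)).sub hcont
  have hwcont : Continuous w := by
    rw [continuous_iff_continuousAt]; exact fun x => (hdw x).continuousAt
  have hw'bdd : ∀ x, ‖w' x‖ ≤ 2 := by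
    intro x
    calc ‖γ' (x + π) - γ' x‖ ≤ ‖γ' (x + π)‖ + ‖γ' x‖ := norm_sub_le _ _
    _ = 2 := by rw [hspeed, hspeed]; norm_num
  -- components
  set f : Fin 3 → ℝ → ℂ := fun i x => ((w x i : ℝ) : ℂ) with hf
  set f' : Fin 3 → ℝ → ℂ := fun i x => ((w' x i : ℝ) : ℂ) with hf'
  have hdf : ∀ i x, HasDerivAt (f i) (f' i x) x := by
    intro i x
    have h1 : HasDerivAt (fun y => w y i) (w' x i) x := by
      have h := ((EuclideanSpace.proj (𝕜 := ℝ) i).hasFDerivAt.comp x (hdw x).hasFDerivAt).hasDerivAt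
      simp at h
      exact h
    exact h1.ofReal_comp
  have hf'cont : ∀ i, Continuous (f' i) :=
    fun i => Complex.continuous_ofReal.comp ((EuclideanSpace.proj (𝕜 := ℝ) i).continuous.comp hw'cont)
  have hfper : ∀ i, Function.Periodic (f i) (2*π) := fun i x => by simp only [hf, hwper]
  have hf'per : ∀ i, Function.Periodic (f' i) (2*π) := fun i x => by simp only [hf', hw'per]
  have hfmean : ∀ i, ∫ x in (0:ℝ)..(0+2*π), f i x = 0 := by
    intro i
    have hint : ∀ a b : ℝ, IntervalIntegrable (f i) MeasureTheory.volume a b :=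
      fun a b => (Complex.continuous_ofReal.comp
        ((EuclideanSpace.proj (𝕜 := ℝ) i).continuous.comp hwcont)).intervalIntegrable a b
    have hsplit := intervalIntegral.integral_add_adjacent_intervals (a := (0:ℝ)) (b := π)
      (c := 0 + 2*π) (hint 0 π) (hint π (0+2*π))
    have h2 : ∫ x in π..(0+2*π), f i x = - ∫ x in (0:ℝ)..π, f i x := by
      have hc : ∫ x in (0:ℝ)..π, f i (x + π) = ∫ x in π..(0+2*π), f i x := by
        rw [intervalIntegral.integral_comp_add_right]
        norm_num [two_mul]
      rw [← hc]
      have : ∀ x, f i (x + π) = - f i x := by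
        intro x
        have hv : w (x + π) i = -(w x i) := by rw [hwanti x]; rfl
        simp only [hf, hv, Complex.ofReal_neg]
      simp only [this]
      rw [intervalIntegral.integral_neg]
    rw [← hsplit, h2]
    ring
  -- Wirtinger for each component
  have hwir : ∀ i, ∫ x in (0:ℝ)..(0+2*π), ‖f i x‖^2 ≤ ∫ x in (0:ℝ)..(0+2*π), ‖f' i x‖^2 :=
    fun i => wirtinger_aux (f i) (f' i) (hdf i) (hf'cont i) (hfper i) (hf'per i) (hfmean i)
  -- sum up
  have hnormw : ∀ (v : EuclideanSpace ℝ (Fin 3)), ‖v‖^2 = ∑ i : Fin 3, (v i)^2 := by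
    intro v
    rw [EuclideanSpace.norm_eq]
    rw [Real.sq_sqrt (by positivity)]
    congr 1; ext i; rw [Real.norm_eq_abs, _root_.sq_abs]

  have hfnorm : ∀ i x, ‖f i x‖^2 = (w x i)^2 := by
    intro i x; rw [hf]; simp only [Complex.norm_real, Real.norm_eq_abs, _root_.sq_abs]
  have hf'norm : ∀ i x, ‖f' i x‖^2 = (w' x i)^2 := by
    intro i x; rw [hf']; simp only [Complex.norm_real, Real.norm_eq_abs, _root_.sq_abs]
  have hsum : ∫ x in (0:ℝ)..(0+2*π), ‖w x‖^2 ≤ ∫ x in (0:ℝ)..(0+2*π), ‖w' x‖^2 := by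
    have e1 : ∫ x in (0:ℝ)..(0+2*π), ‖w x‖^2
        = ∑ i : Fin 3, ∫ x in (0:ℝ)..(0+2*π), ‖f i x‖^2 := by
      rw [← intervalIntegral.integral_finset_sum]
      · refine intervalIntegral.integral_congr fun x _ => ?_
        rw [hnormw (w x)]
        exact Finset.sum_congr rfl fun i _ => (hfnorm i x).symm
      · intro i _
        exact ((Complex.continuous_ofReal.comp ((EuclideanSpace.proj (𝕜 := ℝ) i).continuous.comp
          hwcont)).norm.pow 2).intervalIntegrable _ _
    have e2 : ∫ x in (0:ℝ)..(0+2*π), ‖w' x‖^2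
        = ∑ i : Fin 3, ∫ x in (0:ℝ)..(0+2*π), ‖f' i x‖^2 := by
      rw [← intervalIntegral.integral_finset_sum]
      · refine intervalIntegral.integral_congr fun x _ => ?_
        rw [hnormw (w' x)]
        exact Finset.sum_congr rfl fun i _ => (hf'norm i x).symm
      · intro i _
        exact ((hf'cont i).norm.pow 2).intervalIntegrable _ _
    rw [e1, e2]
    exact Finset.sum_le_sum fun i _ => hwir i
  -- upper bound on the derivative integral
  have hub : ∫ x in (0:ℝ)..(0+2*π), ‖w' x‖^2 ≤ 2*π*4 := by
    have := intervalIntegral.integral_mono_on (a := (0:ℝ)) (b := 0+2*π) (le_of_lt hab0)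
      ((hw'cont.norm.pow 2).intervalIntegrable _ _)
      ((continuous_const (y := (4:ℝ))).intervalIntegrable (μ := MeasureTheory.volume) _ _)
      (fun x _ => by simp only [Pi.pow_apply]; nlinarith [hw'bdd x, norm_nonneg (w' x)])
    simpa using this
  -- lower bound
  have hlb : 2*π*4 < ∫ x in (0:ℝ)..(0+2*π), ‖w x‖^2 := by
    obtain ⟨xm, hxm, hmin⟩ := (isCompact_Icc (a := (0:ℝ)) (b := 0+2*π)).exists_isMinOn
      (Set.nonempty_Icc.mpr (le_of_lt hab0)) (continuous_norm.comp hwcont).continuousOn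
    have hm2 : 2 < ‖w xm‖ := hcon xm
    have h1 : ∫ x in (0:ℝ)..(0+2*π), (‖w xm‖^2 : ℝ) ≤ ∫ x in (0:ℝ)..(0+2*π), ‖w x‖^2 := by
      refine intervalIntegral.integral_mono_on (le_of_lt hab0)
        (continuous_const.intervalIntegrable (μ := MeasureTheory.volume) _ _) ((hwcont.norm.pow 2).intervalIntegrable _ _) ?_
      intro x hx
      have hle : ‖w xm‖ ≤ ‖w x‖ := hmin hx
      nlinarith [norm_nonneg (w xm)]
    have h2 : ∫ x in (0:ℝ)..(0+2*π), (‖w xm‖^2 : ℝ) = 2*π*‖w xm‖^2 := by simp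
    have hm4 : 4 < ‖w xm‖^2 := by nlinarith
    nlinarith [Real.two_pi_pos, hm4]
  linarith [hsum, hub, hlb]

end aux

section main
open Complex Set intervalIntegral

/-- If `γ : 𝕋¹ → ℝ³` is a closed `C¹` curve with unit speed, then the distortion
`δ_∞(γ) = sup_{x≠y} ϑ(x-y)/|γ(x)-γ(y)|` satisfies `δ_∞(γ) ≥ π/2`; equivalently, for any
`ε > 0` there are points `x, y` with `ϑ(x-y) > 0` and `ϑ(x-y) ≥ (π/2-ε)·|γ(x)-γ(y)|`. -/
theorem stmt4 (γ γ' : ℝ → EuclideanSpace ℝ (Fin 3))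
    (hper : Function.Periodic γ (2 * π))
    (hderiv : ∀ x, HasDerivAt γ (γ' x) x)
    (hcont : Continuous γ')
    (hspeed : ∀ x, ‖γ' x‖ = 1) :
    ∀ ε : ℝ, 0 < ε → ∃ x y : ℝ,
      0 < vartheta (x - y) ∧ (π / 2 - ε) * ‖γ x - γ y‖ ≤ vartheta (x - y) := by
  intro ε hε
  obtain ⟨x₀, hx₀⟩ := exists_short_antipodal γ γ' hper hderiv hcont hspeed
  refine ⟨x₀ + π, x₀, ?_, ?_⟩ <;>
  · have hxy : (x₀ + π) - x₀ = π := by ring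
    have hv : vartheta ((x₀ + π) - x₀) = π := by
      rw [hxy]
      unfold vartheta
      have h1 : π / (2 * π) = (1/2 : ℝ) := by
        rw [eq_div_iff (by norm_num : (2:ℝ) ≠ 0)]
        field_simp
      rw [h1]
      have h2 : round ((1:ℝ)/2) = 1 := by norm_num [round_eq]
      rw [h2]
      rw [show π - 2*π*(((1:ℤ)):ℝ) = -π by push_cast; ring, abs_neg, abs_of_pos Real.pi_pos]
    rw [hv]
    first
    | exact Real.pi_pos
    | · have h3 : (0:ℝ) ≤ 2 - ‖γ (x₀ + π) - γ x₀‖ := by linarith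
        nlinarith [mul_nonneg (by positivity : (0:ℝ) ≤ π/2) h3,
          mul_nonneg hε.le (norm_nonneg (γ (x₀ + π) - γ x₀))]

end main
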